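/- Let A : X ⇒ X and B : X ⇒ X be maximally monotone operators. Then ri(dom A − dom B) ∩ ri(ran A + ran B) ≠ ∅, where dom A − dom B is the Minkowski difference and ran A + ran B is the Minkowski sum. -/

import Mathlib

open Set Pointwise

/-- Domain of a set-valued operator. -/
def svDom {X : Type*} (A : X → Set X) : Set X := {x | (A x).Nonempty}

/-- Range of a set-valued operator. -/
def svRan {X : Type*} (A : X → Set X) : Set X := ⋃ x, A x

/-- Monotonicity of a set-valued operator. -/
def IsMonotoneOp {X : Type*} [NormedAddCommGroup X] [InnerProductSpace ℝ X]
    (A : X → Set X) : Prop :=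
  ∀ ⦃x u y v : X⦄, u ∈ A x → v ∈ A y → 0 ≤ (inner ℝ (x - y) (u - v) : ℝ)

/-- Maximal monotonicity of a set-valued operator. -/
def IsMaxMonotoneOp {X : Type*} [NormedAddCommGroup X] [InnerProductSpace ℝ X]
    (A : X → Set X) : Prop :=
  IsMonotoneOp A ∧
    ∀ x u : X, (∀ y v : X, v ∈ A y → 0 ≤ (inner ℝ (x - y) (u - v) : ℝ)) → u ∈ A x

/-- `A` is 3* monotone (rectangular): for every `x ∈ dom A` and `v ∈ ran A`, the set
`{⟪x - z, v - w⟫ : (z,w) ∈ gra A}` is bounded below. -/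
def Is3StarMonotoneOp {X : Type*} [NormedAddCommGroup X] [InnerProductSpace ℝ X]
    (A : X → Set X) : Prop :=
  ∀ x ∈ svDom A, ∀ v ∈ svRan A,
    BddBelow {r : ℝ | ∃ z w : X, w ∈ A z ∧ r = (inner ℝ (x - z) (v - w) : ℝ)}

/-- Two sets are nearly equal if they have the same closure and the same relative
(intrinsic) interior. -/
def NearEq {X : Type*} [NormedAddCommGroup X] [NormedSpace ℝ X] (C D : Set X) : Prop :=
  closure C = closure D ∧ intrinsicInterior ℝ C = intrinsicInterior ℝ D

/-- `J` is the resolvent of `A`: the single-valued, everywhere-defined map with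
`x - J x ∈ A (J x)` for all `x`. -/
def IsResolventOf {X : Type*} [NormedAddCommGroup X] (J : X → X) (A : X → Set X) : Prop :=
  ∀ x : X, x - J x ∈ A (J x)

/-- The Douglas–Rachford operator `T = Id - J_A + J_B ∘ (2 J_A - Id)` built from
the resolvents `J_A` and `J_B`. -/
noncomputable def drT {X : Type*} [NormedAddCommGroup X] [NormedSpace ℝ X]
    (JA JB : X → X) : X → X :=
  fun x => x - JA x + JB ((2 : ℝ) • JA x - x)


-- ------------------------------------------------------------------
-- Auxiliary development
-- ------------------------------------------------------------------

open Filter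
open scoped RealInnerProductSpace

set_option linter.unusedSectionVars false

section RICalc
variable {X : Type*} [NormedAddCommGroup X] [NormedSpace ℝ X]

lemma mem_ri_iff {s : Set X} {x : X} :
    x ∈ intrinsicInterior ℝ s ↔ x ∈ s ∧ ∃ ε > 0, ∀ y ∈ (affineSpan ℝ s : Set X),
      dist y x < ε → y ∈ s := by
  constructor
  · rintro ⟨y, hy, rfl⟩
    have hys : (y : X) ∈ s := Set.mem_preimage.mp (interior_subset hy)
    refine ⟨hys, ?_⟩
    rw [mem_interior_iff_mem_nhds, Metric.mem_nhds_iff] at hy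
    obtain ⟨ε, hε, hball⟩ := hy
    refine ⟨ε, hε, fun z hz hdist => ?_⟩
    have : (⟨z, hz⟩ : affineSpan ℝ s) ∈ Metric.ball y ε := by
      simpa [Metric.mem_ball, Subtype.dist_eq] using hdist
    exact hball this
  · rintro ⟨hxs, ε, hε, h⟩
    have hx' : x ∈ affineSpan ℝ s := subset_affineSpan ℝ s hxs
    refine ⟨⟨x, hx'⟩, ?_, rfl⟩
    rw [mem_interior_iff_mem_nhds, Metric.mem_nhds_iff]
    refine ⟨ε, hε, fun q hq => ?_⟩
    exact h q q.2 (by simpa [Metric.mem_ball, Subtype.dist_eq] using hq)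

lemma ri_mono_of_affineSpan_eq {s t : Set X} (hst : s ⊆ t)
    (hsp : affineSpan ℝ s = affineSpan ℝ t) :
    intrinsicInterior ℝ s ⊆ intrinsicInterior ℝ t := by
  intro x hx
  rw [mem_ri_iff] at hx ⊢
  obtain ⟨hxs, ε, hε, h⟩ := hx
  exact ⟨hst hxs, ε, hε, fun y hy hd => hst (h y (by rw [hsp]; exact hy) hd)⟩

lemma affineSpan_eq_of_sandwich {C D : Set X} (h1 : C ⊆ D)
    (h2 : D ⊆ closure C) (h3 : closure C ⊆ (affineSpan ℝ C : Set X)) :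
    affineSpan ℝ C = affineSpan ℝ D :=
  le_antisymm (affineSpan_mono ℝ h1) (affineSpan_le.mpr (h2.trans h3))

lemma closure_sub_subset' {s t : Set X} : closure s - closure t ⊆ closure (s - t) := by
  rintro z hz
  rw [Set.mem_sub] at hz
  obtain ⟨a, ha, b, hb, rfl⟩ := hz
  obtain ⟨u, hu, hua⟩ := mem_closure_iff_seq_limit.mp ha
  obtain ⟨v, hv, hvb⟩ := mem_closure_iff_seq_limit.mp hb
  exact mem_closure_of_tendsto (hua.sub hvb)
    (Filter.Eventually.of_forall fun n => Set.sub_mem_sub (hu n) (hv n))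

lemma closure_add_subset' {s t : Set X} : closure s + closure t ⊆ closure (s + t) := by
  rintro z hz
  rw [Set.mem_add] at hz
  obtain ⟨a, ha, b, hb, rfl⟩ := hz
  obtain ⟨u, hu, hua⟩ := mem_closure_iff_seq_limit.mp ha
  obtain ⟨v, hv, hvb⟩ := mem_closure_iff_seq_limit.mp hb
  exact mem_closure_of_tendsto (hua.add hvb)
    (Filter.Eventually.of_forall fun n => Set.add_mem_add (hu n) (hv n))

variable [FiniteDimensional ℝ X]

lemma closure_subset_affineSpan {K : Set X} : closure K ⊆ (affineSpan ℝ K : Set X) := by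
  have h1 : IsClosed (affineSpan ℝ K : Set X) := (affineSpan ℝ K).closed_of_finiteDimensional
  calc closure K ⊆ closure (affineSpan ℝ K : Set X) := closure_mono (subset_affineSpan ℝ K)
    _ = _ := h1.closure_eq

lemma combo_mem_ri {K : Set X} (hK : Convex ℝ K) {c₀ c₁ : X}
    (h₀ : c₀ ∈ intrinsicInterior ℝ K) (h₁ : c₁ ∈ closure K) {t : ℝ}
    (ht0 : 0 ≤ t) (ht1 : t < 1) :
    (1 - t) • c₀ + t • c₁ ∈ intrinsicInterior ℝ K := by
  rw [mem_ri_iff] at h₀ ⊢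
  obtain ⟨h₀K, ε, hε, hball⟩ := h₀
  set z := (1 - t) • c₀ + t • c₁ with hz
  have h1t : (0:ℝ) < 1 - t := by linarith
  have hδ : (0:ℝ) < ε * (1 - t) / 4 := by positivity
  -- pick c₁' ∈ K close to c₁
  obtain ⟨c₁', hc₁'K, hc₁'d⟩ := Metric.mem_closure_iff.mp h₁ _ hδ
  have hc₁span : c₁ ∈ affineSpan ℝ K := closure_subset_affineSpan h₁
  have hzspan : z ∈ affineSpan ℝ K := by
    have := AffineSubspace.smul_vsub_vadd_mem (affineSpan ℝ K) t hc₁span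
      (subset_affineSpan ℝ K h₀K) (subset_affineSpan ℝ K h₀K)
    have heq : t • (c₁ -ᵥ c₀) +ᵥ c₀ = z := by
      simp only [vsub_eq_sub, vadd_eq_add, hz]; module
    rwa [heq] at this
  have claim : ∀ y ∈ (affineSpan ℝ K : Set X), dist y z < ε * (1 - t) / 4 → y ∈ K := by
    intro y hyspan hyd
    set y' := (1 / (1 - t)) • (y - c₁') + c₁' with hy'
    have hy'span : y' ∈ affineSpan ℝ K := by
      have := AffineSubspace.smul_vsub_vadd_mem (affineSpan ℝ K) (1 / (1 - t)) hyspan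
        (subset_affineSpan ℝ K hc₁'K) (subset_affineSpan ℝ K hc₁'K)
      simpa only [vsub_eq_sub, vadd_eq_add] using this
    have key : y' - c₀ = (1 / (1 - t)) • ((y - z) + t • (c₁ - c₁')) := by
      rw [hy', hz]
      match_scalars <;> (field_simp; try ring)
    have hnorm : dist y' c₀ < ε := by
      rw [dist_eq_norm, key]
      have h1 : ‖(y - z) + t • (c₁ - c₁')‖ ≤ ‖y - z‖ + t * ‖c₁ - c₁'‖ := by
        calc ‖(y - z) + t • (c₁ - c₁')‖ ≤ ‖y - z‖ + ‖t • (c₁ - c₁')‖ := norm_add_le _ _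
          _ = ‖y - z‖ + |t| * ‖c₁ - c₁'‖ := by rw [norm_smul, Real.norm_eq_abs]
          _ = ‖y - z‖ + t * ‖c₁ - c₁'‖ := by rw [abs_of_nonneg ht0]
      have h2 : ‖y - z‖ < ε * (1 - t) / 4 := by rwa [dist_eq_norm] at hyd
      have h3 : t * ‖c₁ - c₁'‖ < ε * (1 - t) / 4 := by
        have h4 : ‖c₁ - c₁'‖ < ε * (1 - t) / 4 := by
          rw [← dist_eq_norm]; exact hc₁'d
        calc t * ‖c₁ - c₁'‖ ≤ 1 * ‖c₁ - c₁'‖ := by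
              apply mul_le_mul_of_nonneg_right (by linarith) (norm_nonneg _)
          _ = ‖c₁ - c₁'‖ := one_mul _
          _ < _ := h4
      rw [norm_smul, Real.norm_eq_abs, abs_of_pos (by positivity : (0:ℝ) < 1 / (1 - t))]
      calc 1 / (1 - t) * ‖(y - z) + t • (c₁ - c₁')‖
          ≤ 1 / (1 - t) * (‖y - z‖ + t * ‖c₁ - c₁'‖) := by
            apply mul_le_mul_of_nonneg_left h1 (by positivity)
        _ < 1 / (1 - t) * (ε * (1 - t) / 4 + ε * (1 - t) / 4) := by
            apply mul_lt_mul_of_pos_left (by linarith) (by positivity)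
        _ = ε / 2 := by field_simp; ring
        _ < ε := by linarith
    have hy'K : y' ∈ K := hball y' hy'span hnorm
    have hyeq : y = (1 - t) • y' + t • c₁' := by
      rw [hy']; match_scalars <;> (field_simp; try ring)
    rw [hyeq]
    exact hK hy'K hc₁'K (by linarith) ht0 (by ring)
  have hzK : z ∈ K := claim z hzspan (by simpa using hδ)
  exact ⟨hzK, ε * (1 - t) / 4, hδ, claim⟩

lemma convex_ri {K : Set X} (hK : Convex ℝ K) : Convex ℝ (intrinsicInterior ℝ K) := by
  intro x hx y hy a b ha hb hab
  rcases eq_or_lt_of_le (show b ≤ 1 by linarith) with hb1 | hb1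
  · have ha' : a = 0 := by linarith
    rw [ha', hb1]; simpa using hy
  · have ha' : a = 1 - b := by linarith
    rw [ha']
    exact combo_mem_ri hK hx (subset_closure (intrinsicInterior_subset hy)) hb hb1

lemma subset_closure_ri {K : Set X} (hK : Convex ℝ K) (hne : K.Nonempty) :
    K ⊆ closure (intrinsicInterior ℝ K) := by
  obtain ⟨c₀, hc₀⟩ := hne.intrinsicInterior hK
  intro x hx
  have hmem : ∀ n : ℕ, ((1/2:ℝ))^n • c₀ + (1 - ((1/2:ℝ))^n) • x
      ∈ intrinsicInterior ℝ K := by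
    intro n
    have h1 : ((1/2:ℝ))^n ≤ 1 := pow_le_one₀ (by norm_num) (by norm_num)
    have h2 : (0:ℝ) < ((1/2:ℝ))^n := by positivity
    have := combo_mem_ri hK hc₀ (subset_closure hx)
      (t := 1 - ((1/2:ℝ))^n) (by linarith) (by linarith)
    simpa using this
  have htend : Filter.Tendsto
      (fun n : ℕ => ((1/2:ℝ))^n • c₀ + (1 - ((1/2:ℝ))^n) • x) Filter.atTop (nhds x) := by
    have h0 : Filter.Tendsto (fun n : ℕ => ((1/2:ℝ))^n) Filter.atTop (nhds 0) :=
      tendsto_pow_atTop_nhds_zero_of_lt_one (by norm_num) (by norm_num)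
    have h1 : Filter.Tendsto (fun n : ℕ => (1 - (1/2:ℝ)^n)) Filter.atTop (nhds (1 - 0)) :=
      h0.const_sub 1
    have := (h0.smul_const c₀).add (h1.smul_const x)
    simpa using this
  exact mem_closure_of_tendsto htend (Filter.Eventually.of_forall hmem)

end RICalc

section Monotone
variable {X : Type*} [NormedAddCommGroup X] [InnerProductSpace ℝ X] [FiniteDimensional ℝ X]

/-- weighted monotonicity inequality -/
lemma weighted_inner_le {ι : Type*} (tt : Finset ι) (w : ι → ℝ) (y v : ι → X)
    (hw0 : ∀ i ∈ tt, 0 ≤ w i) (hw1 : ∑ i ∈ tt, w i = 1)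
    (hmono : ∀ i ∈ tt, ∀ j ∈ tt, 0 ≤ ⟪y i - y j, v i - v j⟫) :
    ⟪∑ i ∈ tt, w i • y i, ∑ j ∈ tt, w j • v j⟫ ≤ ∑ i ∈ tt, w i * ⟪y i, v i⟫ := by
  have h1 : (0:ℝ) ≤ ∑ i ∈ tt, ∑ j ∈ tt, w i * w j * ⟪y i - y j, v i - v j⟫ := by
    apply Finset.sum_nonneg; intro i hi
    apply Finset.sum_nonneg; intro j hj
    exact mul_nonneg (mul_nonneg (hw0 i hi) (hw0 j hj)) (hmono i hi j hj)
  have T3 : ∑ i ∈ tt, ∑ j ∈ tt, ⟪w i • y i, w j • v j⟫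
      = ⟪∑ i ∈ tt, w i • y i, ∑ j ∈ tt, w j • v j⟫ := by
    rw [sum_inner]
    apply Finset.sum_congr rfl; intro i _
    rw [inner_sum]
  have T4 : ∑ i ∈ tt, ∑ j ∈ tt, ⟪w j • y j, w i • v i⟫
      = ⟪∑ i ∈ tt, w i • y i, ∑ j ∈ tt, w j • v j⟫ := by
    rw [Finset.sum_comm, ← T3]
  have T1 : ∑ i ∈ tt, ∑ j ∈ tt, w i * w j * ⟪y i, v i⟫ = ∑ i ∈ tt, w i * ⟪y i, v i⟫ := by
    apply Finset.sum_congr rfl; intro i _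
    calc ∑ j ∈ tt, w i * w j * ⟪y i, v i⟫ = ∑ j ∈ tt, w i * ⟪y i, v i⟫ * w j := by
          apply Finset.sum_congr rfl; intro j _; ring
      _ = w i * ⟪y i, v i⟫ * ∑ j ∈ tt, w j := by rw [← Finset.mul_sum]
      _ = w i * ⟪y i, v i⟫ := by rw [hw1, mul_one]
  have T2 : ∑ i ∈ tt, ∑ j ∈ tt, w j * w i * ⟪y j, v j⟫ = ∑ i ∈ tt, w i * ⟪y i, v i⟫ := by
    rw [Finset.sum_comm]
    apply Finset.sum_congr rfl; intro j _
    calc ∑ i ∈ tt, w j * w i * ⟪y j, v j⟫ = ∑ i ∈ tt, w j * ⟪y j, v j⟫ * w i := by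
          apply Finset.sum_congr rfl; intro i _; ring
      _ = w j * ⟪y j, v j⟫ * ∑ i ∈ tt, w i := by rw [← Finset.mul_sum]
      _ = w j * ⟪y j, v j⟫ := by rw [hw1, mul_one]
  have h2 : ∑ i ∈ tt, ∑ j ∈ tt, w i * w j * ⟪y i - y j, v i - v j⟫
      = 2 * (∑ i ∈ tt, w i * ⟪y i, v i⟫)
        - 2 * ⟪∑ i ∈ tt, w i • y i, ∑ j ∈ tt, w j • v j⟫ := by
    calc ∑ i ∈ tt, ∑ j ∈ tt, w i * w j * ⟪y i - y j, v i - v j⟫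
        = ∑ i ∈ tt, ∑ j ∈ tt, (w i * w j * ⟪y i, v i⟫ + w j * w i * ⟪y j, v j⟫
          - (⟪w i • y i, w j • v j⟫ + ⟪w j • y j, w i • v i⟫)) := by
          apply Finset.sum_congr rfl; intro i _
          apply Finset.sum_congr rfl; intro j _
          simp only [inner_sub_left, inner_sub_right, real_inner_smul_left,
            real_inner_smul_right]
          ring
      _ = (∑ i ∈ tt, ∑ j ∈ tt, w i * w j * ⟪y i, v i⟫)
          + (∑ i ∈ tt, ∑ j ∈ tt, w j * w i * ⟪y j, v j⟫)
          - ((∑ i ∈ tt, ∑ j ∈ tt, ⟪w i • y i, w j • v j⟫)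
            + (∑ i ∈ tt, ∑ j ∈ tt, ⟪w j • y j, w i • v i⟫)) := by
          simp only [Finset.sum_sub_distrib, Finset.sum_add_distrib]
      _ = _ := by rw [T1, T2, T3, T4]; ring
  linarith

set_option maxHeartbeats 1000000 in
lemma minty_finite (z : X) (t : Finset (X × X))
    (hmono : ∀ p ∈ t, ∀ q ∈ t, 0 ≤ ⟪p.1 - q.1, p.2 - q.2⟫) (htne : t.Nonempty) :
    ∃ x : X, ∀ p ∈ t, ⟪x - p.1, x - z + p.2⟫ ≤ 0 := by
  classical
  set f : X × X → X → ℝ := fun p x => ⟪x - p.1, x - z + p.2⟫ with hf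
  have hfc : ∀ p : X × X, Continuous (f p) := by
    intro p
    exact Continuous.inner (continuous_id.sub continuous_const)
      ((continuous_id.sub continuous_const).add continuous_const)
  set F : X → ℝ := fun x => t.sup' htne (fun p => f p x) with hF
  have hFc : Continuous F :=
    continuous_iff_continuousAt.2 fun x =>
      ContinuousAt.finset_sup'_apply htne (fun p _ => (hfc p).continuousAt)
  -- value expansion
  have fval : ∀ (p : X × X) (x : X),
      f p x = ‖x‖^2 + ⟪x, p.2 - z - p.1⟫ + ⟪p.1, z - p.2⟫ := by
    intro p x
    simp only [hf, inner_sub_left, inner_sub_right, inner_add_left, inner_add_right,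
      real_inner_self_eq_norm_sq]
    rw [real_inner_comm p.1 x]
    ring
  -- quadratic expansion
  have fexp : ∀ (p : X × X) (x h : X),
      f p (x + h) = f p x + ⟪h, (2:ℝ) • x + p.2 - z - p.1⟫ + ‖h‖^2 := by
    intro p x h
    simp only [hf, inner_sub_left, inner_sub_right, inner_add_left, inner_add_right,
      real_inner_self_eq_norm_sq, real_inner_smul_left, real_inner_smul_right]
    rw [real_inner_comm x h, real_inner_comm p.1 h, norm_add_sq_real]
    ring
  -- coercivity
  obtain ⟨p₁, hp₁⟩ := id htne
  have hcoer : Tendsto F (cocompact X) atTop := by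
    set B : ℝ := ‖p₁.2 - z - p₁.1‖ with hB
    set C : ℝ := |⟪p₁.1, z - p₁.2⟫| with hC
    have hev : (fun x => ‖x‖ - C) ≤ᶠ[cocompact X] F := by
      filter_upwards [tendsto_norm_cocompact_atTop.eventually_ge_atTop (B + 1)] with x hx
      have h1 : f p₁ x ≤ F x := Finset.le_sup' (fun p => f p x) hp₁
      have h2 : |⟪x, p₁.2 - z - p₁.1⟫| ≤ ‖x‖ * B := by
        rw [hB]; exact abs_real_inner_le_norm _ _
      have h3 := fval p₁ x
      have h4 : -C ≤ ⟪p₁.1, z - p₁.2⟫ := neg_abs_le _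
      have h5 : -(‖x‖ * B) ≤ ⟪x, p₁.2 - z - p₁.1⟫ := neg_le_of_abs_le h2
      nlinarith [norm_nonneg x]
    have hlow : Tendsto (fun x : X => ‖x‖ - C) (cocompact X) atTop := by
      have := tendsto_atTop_add_const_right atTop (-C) tendsto_id
      exact (this.comp tendsto_norm_cocompact_atTop).congr (fun x => by simp [sub_eq_add_neg])
    exact tendsto_atTop_mono' (cocompact X) hev hlow
  obtain ⟨x₀, hx₀⟩ := hFc.exists_forall_le hcoer
  -- gradients
  set G : X × X → X := fun p => (2:ℝ) • x₀ + p.2 - z - p.1 with hG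
  set I : Finset (X × X) := t.filter (fun p => f p x₀ = F x₀) with hI
  have hIsubt : I ⊆ t := Finset.filter_subset _ _
  -- the key claim: 0 is in the convex hull of active gradients
  have hzero : (0:X) ∈ convexHull ℝ (G '' (I : Set (X × X))) := by
    by_contra h0
    have hfin : (G '' (I : Set (X × X))).Finite := I.finite_toSet.image G
    have hcl : IsClosed (convexHull ℝ (G '' (I : Set (X × X)))) :=
      (hfin.isCompact_convexHull ℝ).isClosed
    obtain ⟨φ, u, hu0, hub⟩ :=
      geometric_hahn_banach_point_closed (convex_convexHull ℝ _) hcl h0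
    have hu : 0 < u := by simpa using hu0
    set d : X := -((InnerProductSpace.toDual ℝ X).symm φ) with hd
    have hdval : ∀ y : X, ⟪y, d⟫ = -(φ y) := by
      intro y
      rw [hd, real_inner_comm, inner_neg_left, InnerProductSpace.toDual_symm_apply]
    have hGd : ∀ p ∈ I, ⟪G p, d⟫ < -u := by
      intro p hp
      have : u < φ (G p) := hub _ (subset_convexHull ℝ _ (mem_image_of_mem G hp))
      rw [hdval]; linarith
    -- per-point step sizes
    have hτ : ∀ p : X × X, ∃ τp : ℝ, 0 < τp ∧ (p ∈ t →
        ∀ τ : ℝ, 0 < τ → τ ≤ τp → f p (x₀ + τ • d) < F x₀) := by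
      intro p
      by_cases hpt : p ∈ t
      · by_cases hact : f p x₀ = F x₀
        · refine ⟨u / (2 * (‖d‖^2 + 1)), by positivity, fun _ τ hτ0 hτle => ?_⟩
          have hGd' := hGd p (Finset.mem_filter.2 ⟨hpt, hact⟩)
          rw [fexp]
          have e1 : ⟪τ • d, (2:ℝ) • x₀ + p.2 - z - p.1⟫ = τ * ⟪G p, d⟫ := by
            rw [real_inner_smul_left, real_inner_comm, hG]
          have e2 : ‖τ • d‖^2 = τ^2 * ‖d‖^2 := by
            rw [norm_smul, Real.norm_eq_abs, mul_pow, sq_abs]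
          rw [e1, e2, hact]
          have h6 : τ * ‖d‖^2 ≤ u / (2 * (‖d‖^2 + 1)) * ‖d‖^2 :=
            mul_le_mul_of_nonneg_right hτle (by positivity)
          have h7 : u / (2 * (‖d‖^2 + 1)) * ‖d‖^2 < u := by
            rw [div_mul_eq_mul_div, div_lt_iff₀ (by positivity)]
            nlinarith [sq_nonneg ‖d‖]
          nlinarith
        · have hlt : f p x₀ < F x₀ :=
            lt_of_le_of_ne (Finset.le_sup' (fun p => f p x₀) hpt) hact
          set gap : ℝ := F x₀ - f p x₀ with hgap
          have hgap0 : 0 < gap := by rw [hgap]; linarith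
          refine ⟨min 1 (gap / (1 + |⟪G p, d⟫| + ‖d‖^2)), by positivity,
            fun _ τ hτ0 hτle => ?_⟩
          rw [fexp]
          have e1 : ⟪τ • d, (2:ℝ) • x₀ + p.2 - z - p.1⟫ = τ * ⟪G p, d⟫ := by
            rw [real_inner_smul_left, real_inner_comm, hG]
          have e2 : ‖τ • d‖^2 = τ^2 * ‖d‖^2 := by
            rw [norm_smul, Real.norm_eq_abs, mul_pow, sq_abs]
          rw [e1, e2]
          have hτ1 : τ ≤ 1 := hτle.trans (min_le_left _ _)
          have hτ2 : τ ≤ gap / (1 + |⟪G p, d⟫| + ‖d‖^2) := hτle.trans (min_le_right _ _)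
          have h8 : τ * ⟪G p, d⟫ ≤ τ * |⟪G p, d⟫| :=
            mul_le_mul_of_nonneg_left (le_abs_self _) hτ0.le
          have h9 : τ^2 * ‖d‖^2 ≤ τ * ‖d‖^2 := by nlinarith [sq_nonneg ‖d‖]
          have h10 : τ * (|⟪G p, d⟫| + ‖d‖^2) < gap := by
            have h11 : τ * (1 + |⟪G p, d⟫| + ‖d‖^2) ≤ gap :=
              (le_div_iff₀ (by positivity)).1 hτ2
            nlinarith [abs_nonneg (⟪G p, d⟫), sq_nonneg ‖d‖]
          nlinarith
      · exact ⟨1, one_pos, fun h => absurd h hpt⟩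
    choose τf hτf0 hτfp using hτ
    set τ : ℝ := t.inf' htne τf with hτdef
    have hτpos : 0 < τ := (Finset.lt_inf'_iff _).2 fun p hp => hτf0 p
    have hlt : F (x₀ + τ • d) < F x₀ := by
      rw [hF]
      refine (Finset.sup'_lt_iff htne).2 fun p hp => ?_
      exact hτfp p hp τ hτpos (Finset.inf'_le _ hp)
    exact absurd (hx₀ (x₀ + τ • d)) (not_le.2 hlt)
  -- extract weights
  rw [convexHull_eq] at hzero
  obtain ⟨ι, tt, w, zf, hw0, hw1, hzs, hcm⟩ := hzero
  have hq : ∀ i : ι, ∃ p : X × X, i ∈ tt → (p ∈ I ∧ G p = zf i) := by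
    intro i
    by_cases hi : i ∈ tt
    · obtain ⟨p, hpI, hpG⟩ := hzs i hi
      exact ⟨p, fun _ => ⟨hpI, hpG⟩⟩
    · exact ⟨p₁, fun h => absurd h hi⟩
  choose q hq using hq
  set Y : X := ∑ i ∈ tt, w i • (q i).1 with hY
  set V : X := ∑ i ∈ tt, w i • (q i).2 with hV
  have hcm' : ∑ i ∈ tt, w i • zf i = 0 := by
    rw [← Finset.centerMass_eq_of_sum_1 _ _ hw1]; exact hcm
  have hx₀eq : (2:ℝ) • x₀ - z + (V - Y) = 0 := by
    have e : ∑ i ∈ tt, w i • zf i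
        = ∑ i ∈ tt, (w i • ((2:ℝ) • x₀ - z) + (w i • (q i).2 - w i • (q i).1)) := by
      apply Finset.sum_congr rfl; intro i hi
      rw [← (hq i hi).2]
      simp only [hG]
      module
    rw [e, Finset.sum_add_distrib, Finset.sum_sub_distrib, ← Finset.sum_smul, hw1,
      one_smul] at hcm'
    rw [← hY, ← hV] at hcm'
    rw [← hcm']
  -- active values
  have hactive : ∀ i ∈ tt, f (q i) x₀ = F x₀ := by
    intro i hi
    exact (Finset.mem_filter.1 (hq i hi).1).2
  have hqt : ∀ i ∈ tt, q i ∈ t := fun i hi => hIsubt (hq i hi).1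
  set S : ℝ := ∑ i ∈ tt, w i * ⟪(q i).1, (q i).2⟫ with hS
  have hsum : ∑ i ∈ tt, w i * f (q i) x₀
      = ‖x₀‖^2 + ⟪x₀, V - z - Y⟫ + (⟪Y, z⟫ - S) := by
    have e : ∀ i ∈ tt, w i * f (q i) x₀
        = w i * ‖x₀‖^2 + ⟪x₀, w i • ((q i).2 - z - (q i).1)⟫
          + (⟪w i • (q i).1, z⟫ - w i * ⟪(q i).1, (q i).2⟫) := by
      intro i hi
      rw [fval]
      rw [real_inner_smul_right, real_inner_smul_left]
      simp only [inner_sub_left, inner_sub_right]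
      ring
    rw [Finset.sum_congr rfl e]
    rw [Finset.sum_add_distrib, Finset.sum_add_distrib, Finset.sum_sub_distrib,
      ← Finset.sum_mul, hw1, one_mul, ← inner_sum, ← sum_inner]
    have e2 : ∑ i ∈ tt, w i • ((q i).2 - z - (q i).1) = V - z - Y := by
      rw [hV, hY]
      rw [Finset.sum_congr rfl (fun i (hi : i ∈ tt) => smul_sub (w i) _ _),
        Finset.sum_sub_distrib]
      rw [Finset.sum_congr rfl (g := fun i => w i • (q i).2 - w i • z)
        (fun i (hi : i ∈ tt) => by rw [smul_sub]), Finset.sum_sub_distrib,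
        ← Finset.sum_smul, hw1, one_smul]
    rw [e2, ← hS]
  have hFsum : ∑ i ∈ tt, w i * f (q i) x₀ = F x₀ := by
    rw [Finset.sum_congr rfl (fun i hi => by rw [hactive i hi]), ← Finset.sum_mul, hw1,
      one_mul]
  have hmono' : ⟪Y, V⟫ ≤ S :=
    weighted_inner_le tt w (fun i => (q i).1) (fun i => (q i).2) hw0 hw1
      (fun i hi j hj => hmono _ (hqt i hi) _ (hqt j hj))
  -- conclude F x₀ ≤ 0
  have hF0 : F x₀ ≤ 0 := by
    have hveq : V - z - Y = -((2:ℝ) • x₀) := by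
      rw [← sub_eq_zero, ← hx₀eq]; abel
    have h1 : ⟪x₀, V - z - Y⟫ = -(2 * ‖x₀‖^2) := by
      rw [hveq, inner_neg_right, real_inner_smul_right, real_inner_self_eq_norm_sq]
    have hzV : z - V = (2:ℝ) • x₀ - Y := by
      rw [← sub_eq_zero]
      calc z - V - ((2:ℝ) • x₀ - Y) = -((2:ℝ) • x₀ - z + (V - Y)) := by abel
        _ = 0 := by rw [hx₀eq, neg_zero]
    have h2 : ⟪Y, z⟫ - ⟪Y, V⟫ = 2 * ⟪Y, x₀⟫ - ‖Y‖^2 := by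
      rw [← inner_sub_right, hzV, inner_sub_right, real_inner_smul_right,
        real_inner_self_eq_norm_sq]
    have h3 := norm_sub_sq_real x₀ Y
    have h4 : ⟪x₀, Y⟫ = ⟪Y, x₀⟫ := real_inner_comm _ _
    have h5 : F x₀ = ‖x₀‖^2 + ⟪x₀, V - z - Y⟫ + (⟪Y, z⟫ - S) := by rw [← hFsum, hsum]
    linarith [sq_nonneg ‖x₀ - Y‖, hmono']
  exact ⟨x₀, fun p hp => le_trans (Finset.le_sup' (fun p => f p x₀) hp) hF0⟩

omit [FiniteDimensional ℝ X] in
lemma graph_nonempty {A : X → Set X} (hA : IsMaxMonotoneOp A) : ∃ p : X × X, p.2 ∈ A p.1 := by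
  by_contra h
  push_neg at h
  exact h (0, 0) (hA.2 0 0 fun y v hv => absurd hv (h (y, v)))

lemma minty {A : X → Set X} (hA : IsMaxMonotoneOp A) (z : X) :
    ∃ x u : X, u ∈ A x ∧ x + u = z := by
  classical
  obtain ⟨p₀, hp₀⟩ := graph_nonempty hA
  set S : {p : X × X // p.2 ∈ A p.1} → Set X :=
    fun p => {x | ⟪x - p.1.1, x - z + p.1.2⟫ ≤ 0} with hS
  have hclosed : ∀ p, IsClosed (S p) := by
    intro p
    exact isClosed_le (Continuous.inner (continuous_id.sub continuous_const)
      ((continuous_id.sub continuous_const).add continuous_const)) continuous_const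
  -- each S p is contained in a ball
  have hsub : ∀ p, S p ⊆ Metric.closedBall ((2⁻¹:ℝ) • (p.1.1 + (z - p.1.2)))
      (‖p.1.1 - (z - p.1.2)‖ / 2) := by
    intro p x hx
    set a := p.1.1
    set b := z - p.1.2
    have hfx : ⟪x - a, x - b⟫ ≤ 0 := by
      have : x - z + p.1.2 = x - b := by simp only [b]; abel
      simpa [hS, this] using hx
    have hiden : ‖x - (2⁻¹:ℝ) • (a + b)‖^2 = ⟪x - a, x - b⟫ + ‖a - b‖^2 / 4 := by
      have e1 : ‖x - (2⁻¹:ℝ) • (a + b)‖^2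
          = ‖x‖^2 - 2 * ⟪x, (2⁻¹:ℝ) • (a + b)⟫ + ‖(2⁻¹:ℝ) • (a + b)‖^2 :=
        norm_sub_sq_real _ _
      have e2 : ⟪x, (2⁻¹:ℝ) • (a + b)⟫ = 2⁻¹ * (⟪x, a⟫ + ⟪x, b⟫) := by
        rw [real_inner_smul_right, inner_add_right]
      have e3 : ‖(2⁻¹:ℝ) • (a + b)‖^2 = 2⁻¹^2 * (‖a‖^2 + 2 * ⟪a, b⟫ + ‖b‖^2) := by
        rw [norm_smul, mul_pow, norm_add_sq_real, Real.norm_eq_abs,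
          abs_of_pos (by norm_num : (0:ℝ) < 2⁻¹)]
      have e4 : ⟪x - a, x - b⟫ = ‖x‖^2 - ⟪x, b⟫ - ⟪x, a⟫ + ⟪a, b⟫ := by
        simp only [inner_sub_left, inner_sub_right, real_inner_self_eq_norm_sq]
        rw [real_inner_comm a x]
        ring
      have e5 : ‖a - b‖^2 = ‖a‖^2 - 2 * ⟪a, b⟫ + ‖b‖^2 := norm_sub_sq_real _ _
      rw [e1, e2, e3, e4, e5]
      ring
    rw [Metric.mem_closedBall, dist_eq_norm]
    have h1 : ‖x - (2⁻¹:ℝ) • (a + b)‖^2 ≤ (‖a - b‖ / 2)^2 := by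
      rw [hiden]; nlinarith [sq_nonneg ‖a - b‖]
    nlinarith [norm_nonneg (x - (2⁻¹:ℝ) • (a + b)), norm_nonneg (a - b),
      div_nonneg (norm_nonneg (a - b)) (by norm_num : (0:ℝ) ≤ 2)]
  have hcomp : IsCompact (S ⟨p₀, hp₀⟩) :=
    Metric.isCompact_of_isClosed_isBounded (hclosed _)
      (Metric.isBounded_closedBall.subset (hsub _))
  have hfip : ∀ u : Finset {p : X × X // p.2 ∈ A p.1},
      (S ⟨p₀, hp₀⟩ ∩ ⋂ p ∈ u, S p).Nonempty := by
    intro u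
    set t : Finset (X × X) := insert p₀ (u.image Subtype.val) with ht
    have htgraph : ∀ p ∈ t, p.2 ∈ A p.1 := by
      intro p hp
      rcases Finset.mem_insert.1 hp with h | h
      · rw [h]; exact hp₀
      · obtain ⟨q, _, rfl⟩ := Finset.mem_image.1 h
        exact q.2
    obtain ⟨x, hx⟩ := minty_finite z t
      (fun p hp q hq => hA.1 (htgraph p hp) (htgraph q hq))
      ⟨p₀, Finset.mem_insert_self _ _⟩
    refine ⟨x, ?_, ?_⟩
    · exact hx p₀ (Finset.mem_insert_self _ _)
    · rw [Set.mem_iInter₂]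
      intro p hp
      exact hx p.1 (Finset.mem_insert_of_mem (Finset.mem_image_of_mem _ hp))
  obtain ⟨x, -, hx⟩ := hcomp.inter_iInter_nonempty S hclosed hfip
  rw [Set.mem_iInter] at hx
  refine ⟨x, z - x, hA.2 x (z - x) fun y v hv => ?_, by abel⟩
  have h := hx ⟨(y, v), hv⟩
  have heq : z - x - v = -(x - z + v) := by abel
  calc (0:ℝ) ≤ -⟪x - y, x - z + v⟫ := by simpa [hS] using h
    _ = ⟪x - y, z - x - v⟫ := by rw [heq, inner_neg_right]

lemma scaled_max_monotone {A : X → Set X} (hA : IsMaxMonotoneOp A) {ε : ℝ} (hε : 0 < ε) :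
    IsMaxMonotoneOp (fun x => ε • A x) := by
  constructor
  · rintro x u y v hu hv
    obtain ⟨u', hu', rfl⟩ := hu
    obtain ⟨v', hv', rfl⟩ := hv
    rw [← smul_sub, real_inner_smul_right]
    exact mul_nonneg hε.le (hA.1 hu' hv')
  · intro x u h
    have hu : ε⁻¹ • u ∈ A x := by
      apply hA.2
      intro y v hv
      have := h y (ε • v) (Set.smul_mem_smul_set hv)
      have heq : u - ε • v = ε • (ε⁻¹ • u - v) := by
        rw [smul_sub, smul_inv_smul₀ hε.ne']
      rw [heq, real_inner_smul_right] at this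
      nlinarith
    have : ε • (ε⁻¹ • u) ∈ ε • A x := Set.smul_mem_smul_set hu
    rwa [smul_inv_smul₀ hε.ne'] at this

lemma minty_scaled {A : X → Set X} (hA : IsMaxMonotoneOp A) {ε : ℝ} (hε : 0 < ε) (z : X) :
    ∃ x v : X, v ∈ A x ∧ x + ε • v = z := by
  obtain ⟨x, u, hu, hxu⟩ := minty (scaled_max_monotone hA hε) z
  obtain ⟨v, hv, rfl⟩ := hu
  exact ⟨x, v, hv, hxu⟩

omit [FiniteDimensional ℝ X] in
lemma inv_max_monotone {A : X → Set X} (hA : IsMaxMonotoneOp A) :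
    IsMaxMonotoneOp (fun u => {x | u ∈ A x}) := by
  constructor
  · rintro u x v y hx hy
    rw [real_inner_comm]
    exact hA.1 hx hy
  · intro u x h
    apply hA.2
    intro y v hv
    rw [real_inner_comm]
    exact h v y hv

omit [FiniteDimensional ℝ X] in
lemma svDom_inv {A : X → Set X} : svDom (fun u => {x | u ∈ A x}) = svRan A := by
  ext u
  simp [svDom, svRan, Set.Nonempty]

-- quadratic bound helper
lemma le_of_sq_le_linear {t a b : ℝ} (ht : 0 ≤ t) (ha : 0 ≤ a) (hb : 0 ≤ b)
    (h : t^2 ≤ a + b * t) : t ≤ b + Real.sqrt a := by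
  by_contra hc
  push_neg at hc
  nlinarith [Real.sq_sqrt ha, Real.sqrt_nonneg a]

set_option maxHeartbeats 1000000 in
lemma ri_conv_dom_subset {A : X → Set X} (hA : IsMaxMonotoneOp A) :
    intrinsicInterior ℝ (convexHull ℝ (svDom A)) ⊆ svDom A := by
  classical
  intro z hz
  rw [mem_ri_iff] at hz
  obtain ⟨hzK, δ, hδ, hball⟩ := hz
  have hzK' := hzK
  -- resolvent-type sequence
  have hminty : ∀ n : ℕ, ∃ x v : X, v ∈ A x ∧ x + (1/(n+1) : ℝ) • v = z := by
    intro n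
    exact minty_scaled hA (by positivity) z
  choose xs vs hgr hxv using hminty
  have hxdom : ∀ n, xs n ∈ svDom A := fun n => ⟨vs n, hgr n⟩
  have hvs : ∀ n, vs n = ((n:ℝ)+1) • (z - xs n) := by
    intro n
    have h := hxv n
    have hne : ((n:ℝ)+1) ≠ 0 := by positivity
    have : (1/(n+1) : ℝ) • vs n = z - xs n := by rw [← h]; abel
    rw [← this, smul_smul]
    rw [mul_one_div, div_self hne, one_smul]
  -- convex representation of z
  rw [convexHull_eq, Set.mem_setOf_eq] at hzK
  obtain ⟨ι, tt, w, yf, hw0, hw1, hys, hcm⟩ := hzK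
  have hcm' : ∑ i ∈ tt, w i • yf i = z := by
    rw [← Finset.centerMass_eq_of_sum_1 _ _ hw1]; exact hcm
  have huf : ∀ i : ι, ∃ u : X, i ∈ tt → u ∈ A (yf i) := by
    intro i
    by_cases hi : i ∈ tt
    · obtain ⟨u, hu⟩ := hys i hi
      exact ⟨u, fun _ => hu⟩
    · exact ⟨0, fun h => absurd h hi⟩
  choose uf huf using huf
  set M₁ : ℝ := ∑ i ∈ tt, w i * |⟪z - yf i, uf i⟫| with hM₁
  set M₂ : ℝ := ∑ i ∈ tt, w i * ‖uf i‖ with hM₂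
  have hM₁0 : 0 ≤ M₁ :=
    Finset.sum_nonneg fun i hi => mul_nonneg (hw0 i hi) (abs_nonneg _)
  have hM₂0 : 0 ≤ M₂ :=
    Finset.sum_nonneg fun i hi => mul_nonneg (hw0 i hi) (norm_nonneg _)
  -- the distance estimate
  have hest : ∀ n : ℕ, ‖xs n - z‖^2 ≤ (1/(n+1) : ℝ) * (M₁ + M₂ * ‖xs n - z‖) := by
    intro n
    have h1 : ∀ i ∈ tt, 0 ≤ ⟪xs n - yf i, vs n - uf i⟫ :=
      fun i hi => hA.1 (hgr n) (huf i hi)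
    have h2 : (0:ℝ) ≤ ∑ i ∈ tt, w i * ⟪xs n - yf i, vs n - uf i⟫ :=
      Finset.sum_nonneg fun i hi => mul_nonneg (hw0 i hi) (h1 i hi)
    have h3 : ∑ i ∈ tt, w i * ⟪xs n - yf i, vs n⟫ = ⟪xs n - z, vs n⟫ := by
      have : ∑ i ∈ tt, w i * ⟪xs n - yf i, vs n⟫
          = ⟪∑ i ∈ tt, w i • (xs n - yf i), vs n⟫ := by
        rw [sum_inner]
        exact Finset.sum_congr rfl fun i _ => (real_inner_smul_left _ _ _).symm
      rw [this]
      congr 1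
      rw [Finset.sum_congr rfl (fun i (hi : i ∈ tt) => smul_sub (w i) (xs n) (yf i)),
        Finset.sum_sub_distrib, ← Finset.sum_smul, hw1, one_smul, hcm']
    have h4 : ∑ i ∈ tt, w i * ⟪xs n - yf i, vs n - uf i⟫
        = ⟪xs n - z, vs n⟫ - ∑ i ∈ tt, w i * ⟪xs n - yf i, uf i⟫ := by
      rw [← h3, ← Finset.sum_sub_distrib]
      apply Finset.sum_congr rfl; intro i _
      rw [inner_sub_right]; ring
    have h5 : ⟪xs n - z, vs n⟫ = -(((n:ℝ)+1) * ‖xs n - z‖^2) := by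
      rw [hvs n, real_inner_smul_right]
      have : z - xs n = -(xs n - z) := by abel
      rw [this, inner_neg_right, real_inner_self_eq_norm_sq]
      ring
    have h6 : ∀ i ∈ tt, w i * ⟪xs n - yf i, uf i⟫
        ≥ -(w i * |⟪z - yf i, uf i⟫|) - w i * (‖xs n - z‖ * ‖uf i‖) := by
      intro i hi
      have e : ⟪xs n - yf i, uf i⟫ = ⟪xs n - z, uf i⟫ + ⟪z - yf i, uf i⟫ := by
        rw [← inner_add_left]
        congr 1
        abel
      have b1 : -(‖xs n - z‖ * ‖uf i‖) ≤ ⟪xs n - z, uf i⟫ :=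
        neg_le_of_abs_le (abs_real_inner_le_norm _ _)
      have b2 : -|⟪z - yf i, uf i⟫| ≤ ⟪z - yf i, uf i⟫ := neg_abs_le _
      have := hw0 i hi
      rw [e]
      nlinarith
    have h7 : ∑ i ∈ tt, w i * ⟪xs n - yf i, uf i⟫ ≥ -M₁ - M₂ * ‖xs n - z‖ := by
      have := Finset.sum_le_sum h6
      rw [hM₁, hM₂]
      have e : ∑ i ∈ tt, (-(w i * |⟪z - yf i, uf i⟫|) - w i * (‖xs n - z‖ * ‖uf i‖))
          = -(∑ i ∈ tt, w i * |⟪z - yf i, uf i⟫|)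
            - (∑ i ∈ tt, w i * ‖uf i‖) * ‖xs n - z‖ := by
        rw [Finset.sum_sub_distrib, ← Finset.sum_neg_distrib, Finset.sum_mul]
        congr 1
        apply Finset.sum_congr rfl; intro i _; ring
      calc ∑ i ∈ tt, w i * ⟪xs n - yf i, uf i⟫
          ≥ ∑ i ∈ tt, (-(w i * |⟪z - yf i, uf i⟫|) - w i * (‖xs n - z‖ * ‖uf i‖)) :=
            Finset.sum_le_sum h6
        _ = _ := by rw [e]
    have h8 : 0 ≤ -(((n:ℝ)+1) * ‖xs n - z‖^2) + M₁ + M₂ * ‖xs n - z‖ := by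
      have := h2
      rw [h4, h5] at this
      linarith
    have h9 : ((n:ℝ)+1) * ‖xs n - z‖^2 ≤ M₁ + M₂ * ‖xs n - z‖ := by linarith
    have hpos : (0:ℝ) < (n:ℝ)+1 := by positivity
    rw [one_div, inv_mul_eq_div, le_div_iff₀ hpos, mul_comm]
    exact h9
  -- xs n → z
  have hxz : Tendsto xs atTop (nhds z) := by
    have hb : ∀ n : ℕ, ‖xs n - z‖ ≤ (1/(n+1):ℝ) * M₂ + Real.sqrt ((1/(n+1):ℝ) * M₁) := by
      intro n
      apply le_of_sq_le_linear (norm_nonneg _) (by positivity)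
        (by positivity)
      calc ‖xs n - z‖^2 ≤ (1/(n+1) : ℝ) * (M₁ + M₂ * ‖xs n - z‖) := hest n
        _ = (1/(n+1):ℝ) * M₁ + ((1/(n+1):ℝ) * M₂) * ‖xs n - z‖ := by ring
    have h0 : Tendsto (fun n : ℕ => (1/(n+1) : ℝ)) atTop (nhds 0) :=
      tendsto_one_div_add_atTop_nhds_zero_nat
    have hbound : Tendsto (fun n : ℕ => (1/(n+1):ℝ) * M₂
        + Real.sqrt ((1/(n+1):ℝ) * M₁)) atTop (nhds 0) := by
      have t1 : Tendsto (fun n : ℕ => (1/(n+1):ℝ) * M₂) atTop (nhds (0 * M₂)) :=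
        h0.mul_const M₂
      have t2 : Tendsto (fun n : ℕ => Real.sqrt ((1/(n+1):ℝ) * M₁)) atTop
          (nhds (Real.sqrt (0 * M₁))) :=
        (Real.continuous_sqrt.tendsto _).comp (h0.mul_const M₁)
      have := t1.add t2
      simpa using this
    have : Tendsto (fun n => ‖xs n - z‖) atTop (nhds 0) :=
      squeeze_zero (fun n => norm_nonneg _) hb hbound
    rwa [tendsto_iff_norm_sub_tendsto_zero]
  -- projection onto the direction of the affine span of the domain
  set V : Submodule ℝ X := (affineSpan ℝ (svDom A)).direction with hV
  have hxspan : ∀ n, xs n ∈ affineSpan ℝ (svDom A) :=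
    fun n => subset_affineSpan ℝ _ (hxdom n)
  have hdiff : ∀ n, ∀ y, y ∈ svDom A → xs n - y ∈ V := by
    intro n y hy
    have := AffineSubspace.vsub_mem_direction (hxspan n) (subset_affineSpan ℝ _ hy)
    simpa [vsub_eq_sub] using this
  set ps : ℕ → X := fun n => (V.orthogonalProjectionOnto (vs n) : X) with hps
  have hpsV : ∀ n, ps n ∈ V := fun n => (V.orthogonalProjectionOnto (vs n)).2
  have hinner : ∀ n, ∀ y, y ∈ svDom A → ⟪xs n - y, vs n⟫ = ⟪xs n - y, ps n⟫ := by
    intro n y hy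
    have horth : vs n - ps n ∈ Vᗮ := Submodule.sub_starProjection_mem_orthogonal (K := V) (vs n)
    have h0 : ⟪xs n - y, vs n - ps n⟫ = 0 :=
      (Submodule.mem_orthogonal V (vs n - ps n)).1 horth _ (hdiff n y hy)
    rw [inner_sub_right] at h0
    linarith
  -- normalized sequence
  set ts : ℕ → ℝ := fun n => 1 / (1 + ‖ps n‖) with hts
  set qs : ℕ → X := fun n => ts n • ps n with hqs
  have hts0 : ∀ n, 0 < ts n := fun n => by positivity
  have hts1 : ∀ n, ts n ≤ 1 := by
    intro n
    rw [hts, div_le_one (by positivity)]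
    linarith [norm_nonneg (ps n)]
  have hqsnorm : ∀ n, ‖qs n‖ = 1 - ts n := by
    intro n
    rw [hqs, norm_smul, Real.norm_eq_abs, abs_of_pos (hts0 n), hts]
    field_simp
    ring
  have hqsball : ∀ n, ‖qs n‖ ≤ 1 := by
    intro n
    rw [hqsnorm n]
    linarith [hts0 n]
  set Fseq : ℕ → X × ℝ := fun n => (qs n, ts n) with hFseq
  have hcomp : IsCompact ((Metric.closedBall (0:X) 1) ×ˢ (Set.Icc (0:ℝ) 1)) :=
    (isCompact_closedBall 0 1).prod isCompact_Icc
  have hmem : ∀ n, Fseq n ∈ (Metric.closedBall (0:X) 1) ×ˢ (Set.Icc (0:ℝ) 1) := by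
    intro n
    rw [Set.mem_prod]
    constructor
    · simpa [Metric.mem_closedBall, dist_eq_norm] using hqsball n
    · exact ⟨(hts0 n).le, hts1 n⟩
  obtain ⟨⟨q, τ⟩, hqτ, φ, hφ, hφt⟩ := hcomp.tendsto_subseq hmem
  have hqt : Tendsto (fun k => qs (φ k)) atTop (nhds q) :=
    (continuous_fst.tendsto _).comp hφt
  have hτt : Tendsto (fun k => ts (φ k)) atTop (nhds τ) :=
    (continuous_snd.tendsto _).comp hφt
  have hxφ : Tendsto (fun k => xs (φ k)) atTop (nhds z) := hxz.comp hφ.tendsto_atTop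
  have hτ01 : τ ∈ Set.Icc (0:ℝ) 1 := (Set.mem_prod.1 hqτ).2
  rcases eq_or_lt_of_le hτ01.1 with hτ0 | hτ0
  · -- τ = 0 : contradiction with z being a relative interior point
    exfalso
    have hnq : ‖q‖ = 1 := by
      have h1 : Tendsto (fun k => ‖qs (φ k)‖) atTop (nhds ‖q‖) := hqt.norm
      have h3 : Tendsto (fun k => ‖qs (φ k)‖) atTop (nhds (1 - τ)) := by
        simp_rw [hqsnorm]
        exact tendsto_const_nhds.sub hτt
      rw [tendsto_nhds_unique h1 h3, ← hτ0, sub_zero]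
    have hqV : q ∈ V := by
      have hcl : IsClosed (V : Set X) := V.closed_of_finiteDimensional
      exact hcl.mem_of_tendsto hqt
        (Filter.Eventually.of_forall fun k => V.smul_mem _ (hpsV _))
    have hqnonneg : ∀ y, y ∈ svDom A → 0 ≤ ⟪z - y, q⟫ := by
      intro y hy
      obtain ⟨wv, hwv⟩ := hy
      have hkey : ∀ n, ts n * ⟪xs n - y, wv⟫ ≤ ⟪xs n - y, qs n⟫ := by
        intro n
        have h1 : 0 ≤ ⟪xs n - y, vs n - wv⟫ := hA.1 (hgr n) hwv
        rw [inner_sub_right, hinner n y ⟨wv, hwv⟩] at h1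
        have h2 := mul_le_mul_of_nonneg_left
          (by linarith : ⟪xs n - y, wv⟫ ≤ ⟪xs n - y, ps n⟫) (hts0 n).le
        rw [hqs, real_inner_smul_right]
        linarith
      have hL : Tendsto (fun k => ⟪xs (φ k) - y, qs (φ k)⟫) atTop
          (nhds ⟪z - y, q⟫) :=
        Tendsto.inner (hxφ.sub tendsto_const_nhds) hqt
      have hR : Tendsto (fun k => ts (φ k) * ⟪xs (φ k) - y, wv⟫) atTop
          (nhds (τ * ⟪z - y, wv⟫)) :=
        hτt.mul (Tendsto.inner (hxφ.sub tendsto_const_nhds) tendsto_const_nhds)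
      have hle := le_of_tendsto_of_tendsto hR hL
        (Filter.Eventually.of_forall fun k => hkey (φ k))
      rw [← hτ0] at hle
      simpa using hle
    have hext : convexHull ℝ (svDom A) ⊆ {y : X | ⟪y, q⟫ ≤ ⟪z, q⟫} := by
      apply convexHull_min
      · intro y hy
        have h := hqnonneg y hy
        rw [inner_sub_left] at h
        simp only [Set.mem_setOf_eq]
        linarith
      · exact convex_halfSpace_le
          ⟨fun a b => inner_add_left a b q, fun c a => real_inner_smul_left a q c⟩ _
    set y' : X := (δ/2) • q + z with hy'
    have hy'span : y' ∈ affineSpan ℝ (convexHull ℝ (svDom A)) := by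
      rw [affineSpan_convexHull]
      have hzspan : z ∈ affineSpan ℝ (svDom A) := by
        have := subset_affineSpan ℝ _ hzK'
        rwa [affineSpan_convexHull] at this
      have := AffineSubspace.vadd_mem_of_mem_direction
        (V.smul_mem (δ/2) hqV) hzspan
      simpa [vadd_eq_add] using this
    have hy'K : y' ∈ convexHull ℝ (svDom A) := by
      apply hball y' hy'span
      rw [hy', dist_eq_norm]
      have : (δ/2) • q + z - z = (δ/2) • q := by abel
      rw [this, norm_smul, Real.norm_eq_abs, abs_of_pos (by linarith), hnq]
      linarith
    have hcontra := hext hy'K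
    simp only [Set.mem_setOf_eq, hy', inner_add_left, real_inner_smul_left,
      real_inner_self_eq_norm_sq, hnq] at hcontra
    norm_num at hcontra
    linarith
  · -- τ > 0 : we obtain an element of A z
    have hτne : τ ≠ 0 := ne_of_gt hτ0
    have hpseq : ∀ n, ps n = (ts n)⁻¹ • qs n := by
      intro n
      rw [hqs, smul_smul, inv_mul_cancel₀ (hts0 n).ne', one_smul]
    have hpst : Tendsto (fun k => ps (φ k)) atTop (nhds (τ⁻¹ • q)) := by
      have h1 := Tendsto.smul (hτt.inv₀ hτne) hqt
      simp_rw [← hpseq] at h1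
      exact h1
    refine ⟨τ⁻¹ • q, hA.2 z (τ⁻¹ • q) fun y v hv => ?_⟩
    have hkey : ∀ n, 0 ≤ ⟪xs n - y, ps n - v⟫ := by
      intro n
      have h1 := hA.1 (hgr n) hv
      rw [inner_sub_right] at h1 ⊢
      rw [hinner n y ⟨v, hv⟩] at h1
      linarith
    have hL : Tendsto (fun k => ⟪xs (φ k) - y, ps (φ k) - v⟫) atTop
        (nhds ⟪z - y, τ⁻¹ • q - v⟫) :=
      Tendsto.inner (hxφ.sub tendsto_const_nhds) (hpst.sub tendsto_const_nhds)
    exact ge_of_tendsto hL (Filter.Eventually.of_forall fun k => hkey (φ k))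

end Monotone

/-- For maximally monotone `A, B` on a finite-dimensional real inner product space,
`ri (dom A - dom B) ∩ ri (ran A + ran B) ≠ ∅`. -/
theorem ri_D_inter_ri_R_nonempty {X : Type*} [NormedAddCommGroup X] [InnerProductSpace ℝ X]
    [FiniteDimensional ℝ X] (A B : X → Set X)
    (hA : IsMaxMonotoneOp A) (hB : IsMaxMonotoneOp B) :
    (intrinsicInterior ℝ (svDom A - svDom B) ∩
      intrinsicInterior ℝ (svRan A + svRan B)).Nonempty := by
  classical
  -- near-convexity package for the domain of a maximally monotone operator
  have package : ∀ (T : X → Set X), IsMaxMonotoneOp T →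
      ∃ C : Set X, Convex ℝ C ∧ C.Nonempty ∧ C ⊆ svDom T ∧ svDom T ⊆ closure C := by
    intro T hT
    obtain ⟨p₀, hp₀⟩ := graph_nonempty hT
    have hdomne : (svDom T).Nonempty := ⟨p₀.1, p₀.2, hp₀⟩
    have hKconv : Convex ℝ (convexHull ℝ (svDom T)) := convex_convexHull ℝ _
    have hKne : (convexHull ℝ (svDom T)).Nonempty :=
      hdomne.mono (subset_convexHull ℝ _)
    refine ⟨intrinsicInterior ℝ (convexHull ℝ (svDom T)), convex_ri hKconv,
      hKne.intrinsicInterior hKconv, ri_conv_dom_subset hT, ?_⟩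
    exact (subset_convexHull ℝ _).trans (subset_closure_ri hKconv hKne)
  obtain ⟨CA, hCAconv, hCAne, hCAsub, hCAcl⟩ := package A hA
  obtain ⟨CB, hCBconv, hCBne, hCBsub, hCBcl⟩ := package B hB
  obtain ⟨RA, hRAconv, hRAne, hRAsub, hRAcl⟩ := package _ (inv_max_monotone hA)
  obtain ⟨RB, hRBconv, hRBne, hRBsub, hRBcl⟩ := package _ (inv_max_monotone hB)
  rw [svDom_inv] at hRAsub hRAcl
  rw [svDom_inv] at hRBsub hRBcl
  set D : Set X := svDom A - svDom B with hD
  set R : Set X := svRan A + svRan B with hR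
  set CD : Set X := CA - CB with hCD
  set CR : Set X := RA + RB with hCR
  have hCDconv : Convex ℝ CD := hCAconv.sub hCBconv
  have hCRconv : Convex ℝ CR := hRAconv.add hRBconv
  obtain ⟨ca, hca⟩ := hCAne
  obtain ⟨cb, hcb⟩ := hCBne
  obtain ⟨ra, hra⟩ := hRAne
  obtain ⟨rb, hrb⟩ := hRBne
  have hCDne : CD.Nonempty := ⟨ca - cb, Set.sub_mem_sub hca hcb⟩
  have hCRne : CR.Nonempty := ⟨ra + rb, Set.add_mem_add hra hrb⟩
  have hCDsubD : CD ⊆ D := Set.sub_subset_sub hCAsub hCBsub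
  have hCRsubR : CR ⊆ R := Set.add_subset_add hRAsub hRBsub
  have hDsub : D ⊆ closure CD := by
    rintro d hd
    rw [hD, Set.mem_sub] at hd
    obtain ⟨a, ha, b, hb, rfl⟩ := hd
    exact closure_sub_subset' (Set.sub_mem_sub (hCAcl ha) (hCBcl hb))
  have hRsub : R ⊆ closure CR := by
    rintro r hr
    rw [hR, Set.mem_add] at hr
    obtain ⟨a, ha, b, hb, rfl⟩ := hr
    exact closure_add_subset' (Set.add_mem_add (hRAcl ha) (hRBcl hb))
  have hspanD : affineSpan ℝ CD = affineSpan ℝ D :=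
    affineSpan_eq_of_sandwich hCDsubD hDsub closure_subset_affineSpan
  have hspanR : affineSpan ℝ CR = affineSpan ℝ R :=
    affineSpan_eq_of_sandwich hCRsubR hRsub closure_subset_affineSpan
  -- D - R = X, using Minty's theorem for B
  have hDR : ∀ x : X, ∃ d ∈ D, ∃ r ∈ R, d - r = x := by
    intro x
    obtain ⟨p₀, hp₀⟩ := graph_nonempty hA
    obtain ⟨b, v, hv, hbv⟩ := minty hB (p₀.1 - p₀.2 - x)
    refine ⟨p₀.1 - b, Set.sub_mem_sub ⟨p₀.2, hp₀⟩ ⟨v, hv⟩, p₀.2 + v,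
      Set.add_mem_add (Set.mem_iUnion.2 ⟨p₀.1, hp₀⟩) (Set.mem_iUnion.2 ⟨b, hv⟩), ?_⟩
    have h1 : b + v = p₀.1 - p₀.2 - x := hbv
    have h2 : p₀.1 - b - (p₀.2 + v) = p₀.1 - p₀.2 - (b + v) := by abel
    rw [h2, h1]
    abel
  -- pick relative interior points and connect them
  obtain ⟨c₀, hc₀⟩ := hCDne.intrinsicInterior hCDconv
  obtain ⟨r₀, hr₀⟩ := hCRne.intrinsicInterior hCRconv
  obtain ⟨d₁, hd₁, r₁, hr₁, hdr⟩ := hDR (r₀ - c₀)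
  set zz : X := (1 - (2⁻¹:ℝ)) • c₀ + (2⁻¹:ℝ) • d₁ with hzz
  have hz1 : zz ∈ intrinsicInterior ℝ CD :=
    combo_mem_ri hCDconv hc₀ (hDsub hd₁) (by norm_num) (by norm_num)
  have hkey : c₀ + d₁ = r₀ + r₁ := by
    calc c₀ + d₁ = c₀ + (d₁ - r₁) + r₁ := by abel
      _ = c₀ + (r₀ - c₀) + r₁ := by rw [hdr]
      _ = r₀ + r₁ := by abel
  have hzeq : zz = (1 - (2⁻¹:ℝ)) • r₀ + (2⁻¹:ℝ) • r₁ := by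
    have e1 : zz = (2⁻¹:ℝ) • (c₀ + d₁) := by rw [hzz]; module
    have e2 : (1 - (2⁻¹:ℝ)) • r₀ + (2⁻¹:ℝ) • r₁ = (2⁻¹:ℝ) • (r₀ + r₁) := by module
    rw [e1, e2, hkey]
  have hz2 : zz ∈ intrinsicInterior ℝ CR := by
    rw [hzeq]
    exact combo_mem_ri hCRconv hr₀ (hRsub hr₁) (by norm_num) (by norm_num)
  exact ⟨zz, ri_mono_of_affineSpan_eq hCDsubD hspanD hz1,
    ri_mono_of_affineSpan_eq hCRsubR hspanR hz2⟩
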